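/- For $e_1,e_2,f$ as above, set $W_w(e_1,e_2,-f) = \mathrm{wind}(e_1,-f) + \mathrm{wind}(-e_2,-e_1) - \mathrm{wind}(-e_2,-f) + \epsilon_2(e_1) + 1$ and $W_b(e_1,e_2,f) = \mathrm{wind}(f,e_2) - \mathrm{wind}(f,-e_1) - \mathrm{wind}(e_1,e_2) - \epsilon_2(e_1)$. Then $W_b(e_1,e_2,f) = W_w(e_1,e_2,-f) - 2$. -/
import Mathlib

open scoped Classical

/-- The determinant of the `2×2` matrix with columns `x, y`; nonzero iff `x,y` not parallel. -/
noncomputable def det2 (x y : ℝ × ℝ) : ℝ := x.1 * y.2 - x.2 * y.1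

/-- The orientation sign `s(x,y) ∈ {±1}` of an ordered pair of (non-parallel) plane vectors. -/
noncomputable def sgn (x y : ℝ × ℝ) : ℝ := Real.sign (det2 x y)

/-- The index `ε₂(x) = (1 - s(x,𝔩))/2` of a vector `x` with respect to the gauge direction `l`. -/
noncomputable def eps2 (l x : ℝ × ℝ) : ℝ := (1 - sgn x l) / 2

/-- The local winding number of the ordered pair `(a,b)` with respect to the gauge
direction `l`. -/
noncomputable def wind (l a b : ℝ × ℝ) : ℝ :=
  if sgn a b = 1 ∧ sgn a l = 1 ∧ sgn l b = 1 then 1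
  else if sgn a b = -1 ∧ sgn a l = -1 ∧ sgn l b = -1 then -1
  else 0

/-- The black-vertex index `W_b(e₁,e₂,f)`. -/
noncomputable def Wb (l e1 e2 f : ℝ × ℝ) : ℝ :=
  wind l f e2 - wind l f (-e1) - wind l e1 e2 - eps2 l e1

/-- The white-vertex index
`W_w(e₁,e₂,-f) = wind(e₁,-f) + wind(-e₂,-e₁) - wind(-e₂,-f) + ε₂(e₁) + 1`. -/
noncomputable def Ww (l e1 e2 f : ℝ × ℝ) : ℝ :=
  wind l e1 (-f) + wind l (-e2) (-e1) - wind l (-e2) (-f) + eps2 l e1 + 1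

lemma det2_swap (x y : ℝ × ℝ) : det2 y x = -det2 x y := by simp [det2]; ring
lemma det2_neg_left (x y : ℝ × ℝ) : det2 (-x) y = -det2 x y := by simp [det2]; ring
lemma det2_neg_right (x y : ℝ × ℝ) : det2 x (-y) = -det2 x y := by simp [det2]; ring

lemma sgn_swap (x y : ℝ × ℝ) : sgn y x = -sgn x y := by
  rw [sgn, sgn, det2_swap, Real.sign_neg]
lemma sgn_neg_left (x y : ℝ × ℝ) : sgn (-x) y = -sgn x y := by
  rw [sgn, sgn, det2_neg_left, Real.sign_neg]
lemma sgn_neg_right (x y : ℝ × ℝ) : sgn x (-y) = -sgn x y := by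
  rw [sgn, sgn, det2_neg_right, Real.sign_neg]

/-- abstract version of `wind` on pure signs -/
noncomputable def windS (p q r : ℝ) : ℝ :=
  if p = 1 ∧ q = 1 ∧ r = 1 then 1
  else if p = -1 ∧ q = -1 ∧ r = -1 then -1 else 0

lemma wind_eq (l a b : ℝ × ℝ) : wind l a b = windS (sgn a b) (sgn a l) (sgn l b) := rfl

lemma windS_main (a b c d e g : ℝ)
    (ha : a = 1 ∨ a = -1) (hb : b = 1 ∨ b = -1) (hc : c = 1 ∨ c = -1)
    (hd : d = 1 ∨ d = -1) (he : e = 1 ∨ e = -1) (hg : g = 1 ∨ g = -1) :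
    windS (-c) g (-e) - windS b g d - windS a d (-e) - (1 - d) / 2
      = (windS (-b) d g + windS (-a) (-e) d - windS c (-e) g + (1 - d) / 2 + 1) - 2 := by
  rcases ha with ha | ha <;> rcases hb with hb | hb <;> rcases hc with hc | hc <;>
    rcases hd with hd | hd <;> rcases he with he | he <;> rcases hg with hg | hg <;>
    subst ha hb hc hd he hg <;> norm_num [windS]

/-- (Lemma `lem:indip`, first identity of eq. (wind_bw_rel).)  For pairwise
non-parallel plane vectors `e₁, e₂, f` and an admissible gauge direction `𝔩`,
`W_b(e₁,e₂,f) = W_w(e₁,e₂,-f) - 2`. -/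
theorem Wb_eq_Ww_sub_two (e1 e2 f l : ℝ × ℝ)
    (h12 : det2 e1 e2 ≠ 0) (h1f : det2 e1 f ≠ 0) (h2f : det2 e2 f ≠ 0)
    (h1l : det2 e1 l ≠ 0) (h2l : det2 e2 l ≠ 0) (hfl : det2 f l ≠ 0) :
    Wb l e1 e2 f = Ww l e1 e2 f - 2 := by
  have key : ∀ x y : ℝ × ℝ, det2 x y ≠ 0 → sgn x y = 1 ∨ sgn x y = -1 := fun x y h =>
    Or.symm (Real.sign_apply_eq_of_ne_zero _ h)
  simp only [Wb, Ww, eps2, wind_eq, sgn_neg_left, sgn_neg_right, neg_neg]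
  rw [show sgn f e2 = -sgn e2 f from sgn_swap _ _,
    show sgn f e1 = -sgn e1 f from sgn_swap _ _,
    show sgn e2 e1 = -sgn e1 e2 from sgn_swap _ _,
    show sgn l e2 = -sgn e2 l from sgn_swap _ _,
    show sgn l e1 = -sgn e1 l from sgn_swap _ _,
    show sgn l f = -sgn f l from sgn_swap _ _]
  simp only [neg_neg]
  exact windS_main _ _ _ _ _ _ (key _ _ h12) (key _ _ h1f) (key _ _ h2f)
    (key _ _ h1l) (key _ _ h2l) (key _ _ hfl)
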